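/- Let A be an n×n non-negative matrix with all entries at most 1, and let μ be an eigenvalue of A with nonzero imaginary part. Then |μ|² ≤ (n² + n·λmax − 2·λmax²)/4, where λmax is the spectral radius (Perron eigenvalue) of A. -/

import Mathlib

open Matrix Polynomial BigOperators

namespace ModulusBoundAux

noncomputable section

variable {n : ℕ}

/-- inner product (conjugate-linear in first argument) on `Fin n → ℂ` -/
def inn (u v : Fin n → ℂ) : ℂ := ∑ j, (starRingEnd ℂ) (u j) * v j

/-- squared norm -/
def nrm (v : Fin n → ℂ) : ℝ := ∑ j, Complex.normSq (v j)

lemma nrm_nonneg (v : Fin n → ℂ) : 0 ≤ nrm v :=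
  Finset.sum_nonneg fun _ _ => Complex.normSq_nonneg _

lemma inn_self (v : Fin n → ℂ) : inn v v = (nrm v : ℂ) := by
  simp only [inn, nrm]
  push_cast
  refine Finset.sum_congr rfl fun j _ => ?_
  rw [Complex.normSq_eq_conj_mul_self]

lemma nrm_eq_zero_iff (v : Fin n → ℂ) : nrm v = 0 ↔ v = 0 := by
  constructor
  · intro h
    funext j
    have h0 : ∀ i ∈ Finset.univ, (0:ℝ) ≤ Complex.normSq (v i) :=
      fun i _ => Complex.normSq_nonneg _
    have := (Finset.sum_eq_zero_iff_of_nonneg h0).1 h j (Finset.mem_univ j)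
    simpa using Complex.normSq_eq_zero.1 this
  · intro h; simp [h, nrm]

lemma inn_conj_symm (u v : Fin n → ℂ) : inn v u = (starRingEnd ℂ) (inn u v) := by
  simp only [inn, map_sum]
  refine Finset.sum_congr rfl fun j _ => ?_
  rw [_root_.map_mul]
  simp [Complex.conj_conj, mul_comm]

lemma inn_add_right (u v w : Fin n → ℂ) : inn u (v + w) = inn u v + inn u w := by
  simp only [inn, Pi.add_apply, mul_add, Finset.sum_add_distrib]

lemma inn_sub_right (u v w : Fin n → ℂ) : inn u (v - w) = inn u v - inn u w := by
  simp only [inn, Pi.sub_apply, mul_sub, Finset.sum_sub_distrib]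

lemma inn_smul_right (a : ℂ) (u v : Fin n → ℂ) : inn u (a • v) = a * inn u v := by
  simp only [inn, Pi.smul_apply, smul_eq_mul, Finset.mul_sum]
  exact Finset.sum_congr rfl fun j _ => by ring

lemma inn_smul_left (a : ℂ) (u v : Fin n → ℂ) :
    inn (a • u) v = (starRingEnd ℂ) a * inn u v := by
  simp only [inn, Pi.smul_apply, smul_eq_mul, Finset.mul_sum]
  refine Finset.sum_congr rfl fun j _ => ?_
  rw [_root_.map_mul]
  ring

lemma inn_add_left (u v w : Fin n → ℂ) : inn (u + v) w = inn u w + inn v w := by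
  simp only [inn, Pi.add_apply]
  rw [← Finset.sum_add_distrib]
  refine Finset.sum_congr rfl fun j _ => ?_
  rw [_root_.map_add]
  ring

lemma nrm_smul (a : ℂ) (v : Fin n → ℂ) : nrm (a • v) = Complex.normSq a * nrm v := by
  simp only [nrm, Pi.smul_apply, smul_eq_mul, Finset.mul_sum]
  exact Finset.sum_congr rfl fun j _ => Complex.normSq_mul a (v j)

lemma nrm_add_of_inn_eq_zero {u v : Fin n → ℂ} (h : inn u v = 0) :
    nrm (u + v) = nrm u + nrm v := by
  have h' : inn v u = 0 := by rw [inn_conj_symm, h, map_zero]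
  have : inn (u + v) (u + v) = ((nrm u + nrm v : ℝ) : ℂ) := by
    rw [inn_add_left, inn_add_right, inn_add_right, h, h', inn_self, inn_self]
    push_cast; ring
  have := (inn_self (u + v)) ▸ this
  exact_mod_cast this


lemma nrm_pos_of_ne_zero {v : Fin n → ℂ} (h : v ≠ 0) : 0 < nrm v := by
  rcases lt_or_eq_of_le (nrm_nonneg v) with h' | h'
  · exact h'
  · exact absurd ((nrm_eq_zero_iff v).1 h'.symm) h

lemma inn_self_mul_cancel {p : Fin n → ℂ} (hp : nrm p ≠ 0) (z : ℂ) :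
    z / (nrm p : ℂ) * (nrm p : ℂ) = z :=
  div_mul_cancel₀ z (by exact_mod_cast hp)

lemma normSq_coeff {p : Fin n → ℂ} (hp : nrm p ≠ 0) (z : ℂ) :
    Complex.normSq (z / (nrm p : ℂ)) * nrm p = Complex.normSq z / nrm p := by
  rw [Complex.normSq_div]
  rw [Complex.normSq_ofReal]
  field_simp

lemma bessel3 {p₁ p₂ p₃ : Fin n → ℂ} (v : Fin n → ℂ)
    (h12 : inn p₁ p₂ = 0) (h13 : inn p₁ p₃ = 0) (h23 : inn p₂ p₃ = 0)
    (n1 : nrm p₁ ≠ 0) (n2 : nrm p₂ ≠ 0) (n3 : nrm p₃ ≠ 0) :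
    Complex.normSq (inn p₁ v) / nrm p₁ + Complex.normSq (inn p₂ v) / nrm p₂ +
      Complex.normSq (inn p₃ v) / nrm p₃ ≤ nrm v := by
  have h21 : inn p₂ p₁ = 0 := by rw [inn_conj_symm, h12, map_zero]
  have h31 : inn p₃ p₁ = 0 := by rw [inn_conj_symm, h13, map_zero]
  have h32 : inn p₃ p₂ = 0 := by rw [inn_conj_symm, h23, map_zero]
  set a1 : ℂ := inn p₁ v / (nrm p₁ : ℂ) with ha1
  set a2 : ℂ := inn p₂ v / (nrm p₂ : ℂ) with ha2
  set a3 : ℂ := inn p₃ v / (nrm p₃ : ℂ) with ha3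
  set u : Fin n → ℂ := a1 • p₁ + a2 • p₂ + a3 • p₃ with hu
  set w : Fin n → ℂ := v - u with hw
  have hp1w : inn p₁ w = 0 := by
    rw [hw, inn_sub_right, hu, inn_add_right, inn_add_right, inn_smul_right,
      inn_smul_right, inn_smul_right, h12, h13, inn_self, ha1,
      inn_self_mul_cancel n1]
    ring
  have hp2w : inn p₂ w = 0 := by
    rw [hw, inn_sub_right, hu, inn_add_right, inn_add_right, inn_smul_right,
      inn_smul_right, inn_smul_right, h21, h23, inn_self, ha2,
      inn_self_mul_cancel n2]
    ring
  have hp3w : inn p₃ w = 0 := by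
    rw [hw, inn_sub_right, hu, inn_add_right, inn_add_right, inn_smul_right,
      inn_smul_right, inn_smul_right, h31, h32, inn_self, ha3,
      inn_self_mul_cancel n3]
    ring
  have huw : inn u w = 0 := by
    rw [hu, inn_add_left, inn_add_left, inn_smul_left, inn_smul_left, inn_smul_left,
      hp1w, hp2w, hp3w]
    ring
  have hv : v = u + w := by rw [hw]; abel
  have h12' : inn (a1 • p₁) (a2 • p₂) = 0 := by
    rw [inn_smul_left, inn_smul_right, h12]; ring
  have h3' : inn (a1 • p₁ + a2 • p₂) (a3 • p₃) = 0 := by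
    rw [inn_add_left, inn_smul_left, inn_smul_left, inn_smul_right, inn_smul_right,
      h13, h23]
    ring
  have hnu : nrm u = Complex.normSq (inn p₁ v) / nrm p₁ +
      Complex.normSq (inn p₂ v) / nrm p₂ + Complex.normSq (inn p₃ v) / nrm p₃ := by
    rw [hu, nrm_add_of_inn_eq_zero h3', nrm_add_of_inn_eq_zero h12', nrm_smul, nrm_smul,
      nrm_smul, ha1, ha2, ha3, normSq_coeff n1, normSq_coeff n2, normSq_coeff n3]
  have : nrm v = nrm u + nrm w := by rw [hv, nrm_add_of_inn_eq_zero huw]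
  have hnw := nrm_nonneg w
  linarith [hnu ▸ (le_of_eq this.symm)]

lemma cs (u v : Fin n → ℂ) : Complex.normSq (inn u v) ≤ nrm u * nrm v := by
  by_cases h : nrm u = 0
  · have : u = 0 := (nrm_eq_zero_iff u).1 h
    subst this
    have : inn (0 : Fin n → ℂ) v = 0 := by simp [inn]
    rw [this, h, zero_mul, map_zero]
  · set a : ℂ := inn u v / (nrm u : ℂ) with ha
    set w : Fin n → ℂ := v - a • u with hw
    have huw : inn u w = 0 := by
      rw [hw, inn_sub_right, inn_smul_right, inn_self, ha, inn_self_mul_cancel h]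
      ring
    have h2 : inn (a • u) w = 0 := by rw [inn_smul_left, huw]; ring
    have hv : v = a • u + w := by rw [hw]; abel
    have : nrm v = Complex.normSq (inn u v) / nrm u + nrm w := by
      conv_lhs => rw [hv]
      rw [nrm_add_of_inn_eq_zero h2, nrm_smul, ha, normSq_coeff h]
    have hnw := nrm_nonneg w
    have hupos : 0 < nrm u := lt_of_le_of_ne (nrm_nonneg u) (Ne.symm h)
    rw [div_add' _ _ _ h] at this
    have : Complex.normSq (inn u v) + nrm w * nrm u = nrm v * nrm u := by
      field_simp at this ⊢
      linarith [this]
    nlinarith [this, mul_nonneg hnw (le_of_lt hupos)]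


def rowconj (B : Matrix (Fin n) (Fin n) ℂ) (k : Fin n) : Fin n → ℂ :=
  fun j => (starRingEnd ℂ) (B k j)

lemma inn_rowconj (B : Matrix (Fin n) (Fin n) ℂ) (k : Fin n) (p : Fin n → ℂ) :
    inn (rowconj B k) p = B.mulVec p k := by
  simp only [inn, rowconj, Complex.conj_conj, Matrix.mulVec, dotProduct]

lemma normSq_inn_rowconj (B : Matrix (Fin n) (Fin n) ℂ) (k : Fin n) (p : Fin n → ℂ) :
    Complex.normSq (inn p (rowconj B k)) = Complex.normSq (B.mulVec p k) := by
  rw [inn_conj_symm, Complex.normSq_conj, inn_rowconj]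

lemma nrm_rowconj (B : Matrix (Fin n) (Fin n) ℂ) (k : Fin n) :
    nrm (rowconj B k) = ∑ j, Complex.normSq (B k j) := by
  simp only [nrm, rowconj, Complex.normSq_conj]

lemma nrm_mulVec_sum (B : Matrix (Fin n) (Fin n) ℂ) (p : Fin n → ℂ) :
    nrm (B.mulVec p) = ∑ k, Complex.normSq (B.mulVec p k) := rfl

/-- Key inequality: for three orthogonal nonzero vectors, the sum of normalized
norms of their images is at most the squared Frobenius norm. -/
lemma sum_nrm_mulVec_le (B : Matrix (Fin n) (Fin n) ℂ) {p₁ p₂ p₃ : Fin n → ℂ}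
    (h12 : inn p₁ p₂ = 0) (h13 : inn p₁ p₃ = 0) (h23 : inn p₂ p₃ = 0)
    (n1 : nrm p₁ ≠ 0) (n2 : nrm p₂ ≠ 0) (n3 : nrm p₃ ≠ 0) :
    nrm (B.mulVec p₁) / nrm p₁ + nrm (B.mulVec p₂) / nrm p₂ +
      nrm (B.mulVec p₃) / nrm p₃ ≤ ∑ k, ∑ j, Complex.normSq (B k j) := by
  have hrow : ∀ k : Fin n,
      Complex.normSq (B.mulVec p₁ k) / nrm p₁ + Complex.normSq (B.mulVec p₂ k) / nrm p₂ +
        Complex.normSq (B.mulVec p₃ k) / nrm p₃ ≤ ∑ j, Complex.normSq (B k j) := by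
    intro k
    have := bessel3 (rowconj B k) h12 h13 h23 n1 n2 n3
    rw [normSq_inn_rowconj, normSq_inn_rowconj, normSq_inn_rowconj, nrm_rowconj] at this
    exact this
  calc nrm (B.mulVec p₁) / nrm p₁ + nrm (B.mulVec p₂) / nrm p₂ + nrm (B.mulVec p₃) / nrm p₃
      = ∑ k, (Complex.normSq (B.mulVec p₁ k) / nrm p₁ +
          Complex.normSq (B.mulVec p₂ k) / nrm p₂ +
          Complex.normSq (B.mulVec p₃ k) / nrm p₃) := by
        rw [Finset.sum_add_distrib, Finset.sum_add_distrib, nrm_mulVec_sum, nrm_mulVec_sum,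
          nrm_mulVec_sum, Finset.sum_div, Finset.sum_div, Finset.sum_div]
    _ ≤ ∑ k, ∑ j, Complex.normSq (B k j) := Finset.sum_le_sum fun k _ => hrow k

lemma nrm_mulVec_le (B : Matrix (Fin n) (Fin n) ℂ) (x : Fin n → ℂ) :
    nrm (B.mulVec x) ≤ (∑ k, ∑ j, Complex.normSq (B k j)) * nrm x := by
  rw [nrm_mulVec_sum, Finset.sum_mul]
  refine Finset.sum_le_sum fun k _ => ?_
  have := cs (rowconj B k) x
  rw [inn_rowconj, nrm_rowconj] at this
  exact this


lemma exists_eigenvector (B : Matrix (Fin n) (Fin n) ℂ) (z : ℂ)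
    (hz : z ∈ B.charpoly.roots) : ∃ x : Fin n → ℂ, x ≠ 0 ∧ B.mulVec x = z • x := by
  have hroot : B.charpoly.IsRoot z := (Polynomial.mem_roots'.1 hz).2
  have hdet : ((charmatrix B).map (Polynomial.evalRingHom z)).det = 0 := by
    rw [← RingHom.mapMatrix_apply, ← RingHom.map_det]
    simpa [Matrix.charpoly] using hroot
  have hmat : (charmatrix B).map (Polynomial.evalRingHom z) = z • (1 : Matrix (Fin n) (Fin n) ℂ) - B := by
    ext i j
    by_cases h : i = j
    · subst h
      simp [charmatrix_apply_eq, Matrix.one_apply]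
    · simp [charmatrix_apply_ne _ _ _ h, Matrix.one_apply_ne h]
  rw [hmat] at hdet
  obtain ⟨v, hv0, hv⟩ := (Matrix.exists_mulVec_eq_zero_iff).2 hdet
  refine ⟨v, hv0, ?_⟩
  rw [Matrix.sub_mulVec, Matrix.smul_mulVec, Matrix.one_mulVec, sub_eq_zero] at hv
  exact hv.symm


lemma mulVec_smul' (B : Matrix (Fin n) (Fin n) ℂ) (a : ℂ) (v : Fin n → ℂ) :
    B.mulVec (a • v) = a • B.mulVec v := by
  funext k
  simp only [Matrix.mulVec, dotProduct, Pi.smul_apply, smul_eq_mul, Finset.mul_sum]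
  exact Finset.sum_congr rfl fun j _ => by ring

lemma mulVec_sub' (B : Matrix (Fin n) (Fin n) ℂ) (u v : Fin n → ℂ) :
    B.mulVec (u - v) = B.mulVec u - B.mulVec v := by
  funext k
  simp only [Matrix.mulVec, dotProduct, Pi.sub_apply, mul_sub,
    Finset.sum_sub_distrib]

lemma sub_mulVec' (B C : Matrix (Fin n) (Fin n) ℂ) (v : Fin n → ℂ) :
    (B - C).mulVec v = B.mulVec v - C.mulVec v := by
  funext k
  simp only [Matrix.mulVec, dotProduct, Matrix.sub_apply, sub_mul,
    Finset.sum_sub_distrib, Pi.sub_apply]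


lemma mulVec_add' (B : Matrix (Fin n) (Fin n) ℂ) (u v : Fin n → ℂ) :
    B.mulVec (u + v) = B.mulVec u + B.mulVec v := by
  funext k
  simp only [Matrix.mulVec, dotProduct, Pi.add_apply, mul_add,
    Finset.sum_add_distrib]

/-- Schur-type inequality for the three eigenvalues `lC`, `μ`, `conj μ`. -/
lemma schur_three (B : Matrix (Fin n) (Fin n) ℂ)
    (hBreal : ∀ k j, (starRingEnd ℂ) (B k j) = B k j)
    (lC μ : ℂ) (x y : Fin n → ℂ) (hx0 : x ≠ 0) (hy0 : y ≠ 0)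
    (hx : B.mulVec x = μ • x) (hy : B.mulVec y = lC • y)
    (hne1 : μ ≠ lC) (hne2 : (starRingEnd ℂ) μ ≠ μ) (hne3 : (starRingEnd ℂ) μ ≠ lC) :
    Complex.normSq lC + 2 * Complex.normSq μ ≤ ∑ k, ∑ j, Complex.normSq (B k j) := by
  have hxbar : B.mulVec (star x) = (starRingEnd ℂ) μ • (star x) := by
    funext k
    have h1 : B.mulVec (star x) k = (starRingEnd ℂ) (B.mulVec x k) := by
      simp only [Matrix.mulVec, dotProduct, map_sum]
      refine Finset.sum_congr rfl fun j _ => ?_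
      rw [_root_.map_mul, hBreal]
      simp [Pi.star_apply, Complex.star_def]
    rw [h1, hx]
    simp only [Pi.smul_apply, smul_eq_mul, _root_.map_mul, Pi.star_apply,
      Complex.star_def]
  have hN1 : nrm y ≠ 0 := (nrm_pos_of_ne_zero hy0).ne'
  set a : ℂ := inn y x / (nrm y : ℂ) with ha
  set p₂ : Fin n → ℂ := x - a • y with hp₂
  have h12 : inn y p₂ = 0 := by
    rw [hp₂, inn_sub_right, inn_smul_right, inn_self, ha, inn_self_mul_cancel hN1,
      sub_self]
  have hxeq : x = p₂ + a • y := by rw [hp₂]; abel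
  have hp20 : p₂ ≠ 0 := by
    intro h0
    have hxa : x = a • y := by
      conv_lhs => rw [hxeq, h0]
      rw [zero_add]
    have e1 : μ • x = (a * lC) • y := by
      rw [← hx, hxa, mulVec_smul', hy, smul_smul]
    have e2 : μ • x = (μ * a) • y := by rw [hxa, smul_smul]
    have hz : (μ * a - a * lC) • y = 0 := by
      rw [sub_smul, ← e1, ← e2, sub_self]
    rcases smul_eq_zero.1 hz with h | h
    · have : a * (μ - lC) = 0 := by linear_combination h
      rcases mul_eq_zero.1 this with h' | h'
      · exact hx0 (by rw [hxa, h', zero_smul])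
      · exact hne1 (by linear_combination h')
    · exact hy0 h
  have hN2 : nrm p₂ ≠ 0 := (nrm_pos_of_ne_zero hp20).ne'
  have hBp2 : B.mulVec p₂ = μ • p₂ + ((μ - lC) * a) • y := by
    rw [hp₂, mulVec_sub', mulVec_smul', hx, hy]
    funext k
    simp only [Pi.add_apply, Pi.sub_apply, Pi.smul_apply, smul_eq_mul]
    ring
  have h21 : inn p₂ y = 0 := by rw [inn_conj_symm, h12, map_zero]
  set b₁ : ℂ := inn y (star x) / (nrm y : ℂ) with hb₁
  set b₂ : ℂ := inn p₂ (star x) / (nrm p₂ : ℂ) with hb₂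
  set p₃ : Fin n → ℂ := star x - b₁ • y - b₂ • p₂ with hp₃
  have h13 : inn y p₃ = 0 := by
    rw [hp₃, inn_sub_right, inn_sub_right, inn_smul_right, inn_smul_right, inn_self,
      h12, hb₁, inn_self_mul_cancel hN1]
    ring
  have h23 : inn p₂ p₃ = 0 := by
    rw [hp₃, inn_sub_right, inn_sub_right, inn_smul_right, inn_smul_right, inn_self,
      h21, hb₂, inn_self_mul_cancel hN2]
    ring
  have hxbareq : star x = p₃ + b₁ • y + b₂ • p₂ := by rw [hp₃]; abel
  have hp30 : p₃ ≠ 0 := by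
    intro h0
    have hxx : star x = b₁ • y + b₂ • p₂ := by
      conv_lhs => rw [hxbareq, h0]
      rw [zero_add]
    have e1 : (starRingEnd ℂ) μ • star x
        = b₁ • (lC • y) + b₂ • (μ • p₂ + ((μ - lC) * a) • y) := by
      rw [← hxbar]
      conv_lhs => rw [hxx]
      rw [mulVec_add', mulVec_smul', mulVec_smul', hy, hBp2]
    have e2 : inn p₂ ((starRingEnd ℂ) μ • star x)
        = (starRingEnd ℂ) μ * (inn p₂ (star x)) := inn_smul_right _ _ _
    have e3 : inn p₂ (b₁ • (lC • y) + b₂ • (μ • p₂ + ((μ - lC) * a) • y))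
        = μ * (b₂ * (nrm p₂ : ℂ)) := by
      rw [inn_add_right, inn_smul_right, inn_smul_right, inn_smul_right,
        inn_add_right, inn_smul_right, inn_smul_right, h21, inn_self]
      ring
    have e4 : inn p₂ (star x) = b₂ * (nrm p₂ : ℂ) := by
      rw [hb₂, inn_self_mul_cancel hN2]
    have e5 : (starRingEnd ℂ) μ * (b₂ * (nrm p₂ : ℂ)) = μ * (b₂ * (nrm p₂ : ℂ)) := by
      rw [← e4, ← e2, e1, e3, e4]
    have hb20 : b₂ = 0 := by
      have h6 : ((starRingEnd ℂ) μ - μ) * (b₂ * (nrm p₂ : ℂ)) = 0 := by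
        linear_combination e5
      rcases mul_eq_zero.1 h6 with h' | h'
      · exact absurd (by linear_combination h') hne2
      · rcases mul_eq_zero.1 h' with h'' | h''
        · exact h''
        · exact absurd h'' (by exact_mod_cast hN2)
    have hxx2 : star x = b₁ • y := by rw [hxx, hb20, zero_smul, add_zero]
    have f1 : (starRingEnd ℂ) μ • star x = (b₁ * lC) • y := by
      rw [← hxbar]
      conv_lhs => rw [hxx2]
      rw [mulVec_smul', hy, smul_smul]
    have f2 : (starRingEnd ℂ) μ • star x = ((starRingEnd ℂ) μ * b₁) • y := by
      rw [hxx2, smul_smul]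
    have hz : (((starRingEnd ℂ) μ) * b₁ - b₁ * lC) • y = 0 := by
      rw [sub_smul, ← f1, ← f2, sub_self]
    rcases smul_eq_zero.1 hz with h | h
    · have : b₁ * ((starRingEnd ℂ) μ - lC) = 0 := by linear_combination h
      rcases mul_eq_zero.1 this with h' | h'
      · have : star x = 0 := by rw [hxx2, h', zero_smul]
        exact hx0 (star_eq_zero.1 this)
      · exact hne3 (by linear_combination h')
    · exact hy0 h
  have hN3 : nrm p₃ ≠ 0 := (nrm_pos_of_ne_zero hp30).ne'
  have h31 : inn p₃ y = 0 := by rw [inn_conj_symm, h13, map_zero]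
  have h32 : inn p₃ p₂ = 0 := by rw [inn_conj_symm, h23, map_zero]
  have hBp3 : B.mulVec p₃ = ((starRingEnd ℂ) μ • p₃
      + (b₁ * ((starRingEnd ℂ) μ - lC) - b₂ * ((μ - lC) * a)) • y)
      + (b₂ * ((starRingEnd ℂ) μ - μ)) • p₂ := by
    have hsx : B.mulVec (star x) = (starRingEnd ℂ) μ • p₃
        + ((starRingEnd ℂ) μ * b₁) • y + ((starRingEnd ℂ) μ * b₂) • p₂ := by
      rw [hxbar]
      conv_lhs => rw [hxbareq]
      funext k
      simp only [Pi.add_apply, Pi.smul_apply, smul_eq_mul]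
      ring
    rw [hp₃, mulVec_sub', mulVec_sub', mulVec_smul', mulVec_smul', hy, hBp2, ← hp₃, hsx]
    funext k
    simp only [Pi.add_apply, Pi.sub_apply, Pi.smul_apply, smul_eq_mul]
    ring
  -- norms of the images
  have hnr1 : nrm (B.mulVec y) = Complex.normSq lC * nrm y := by rw [hy, nrm_smul]
  have horth2 : inn (μ • p₂) (((μ - lC) * a) • y) = 0 := by
    rw [inn_smul_left, inn_smul_right, h21]
    ring
  have hnr2 : nrm (B.mulVec p₂)
      = Complex.normSq μ * nrm p₂ + Complex.normSq ((μ - lC) * a) * nrm y := by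
    rw [hBp2, nrm_add_of_inn_eq_zero horth2, nrm_smul, nrm_smul]
  have horth3a : inn ((starRingEnd ℂ) μ • p₃)
      ((b₁ * ((starRingEnd ℂ) μ - lC) - b₂ * ((μ - lC) * a)) • y) = 0 := by
    rw [inn_smul_left, inn_smul_right, h31]
    ring
  have horth3b : inn ((starRingEnd ℂ) μ • p₃
      + (b₁ * ((starRingEnd ℂ) μ - lC) - b₂ * ((μ - lC) * a)) • y)
      ((b₂ * ((starRingEnd ℂ) μ - μ)) • p₂) = 0 := by
    rw [inn_add_left, inn_smul_left, inn_smul_left, inn_smul_right, inn_smul_right,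
      h32, h12]
    ring
  have hnr3 : nrm (B.mulVec p₃)
      = Complex.normSq ((starRingEnd ℂ) μ) * nrm p₃
        + Complex.normSq (b₁ * ((starRingEnd ℂ) μ - lC) - b₂ * ((μ - lC) * a)) * nrm y
        + Complex.normSq (b₂ * ((starRingEnd ℂ) μ - μ)) * nrm p₂ := by
    rw [hBp3, nrm_add_of_inn_eq_zero horth3b, nrm_add_of_inn_eq_zero horth3a,
      nrm_smul, nrm_smul, nrm_smul]
  have hmain := sum_nrm_mulVec_le B h12 h13 h23 hN1 hN2 hN3
  have hy_pos : 0 < nrm y := nrm_pos_of_ne_zero hy0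
  have hp2_pos : 0 < nrm p₂ := nrm_pos_of_ne_zero hp20
  have hp3_pos : 0 < nrm p₃ := nrm_pos_of_ne_zero hp30
  have t1 : nrm (B.mulVec y) / nrm y = Complex.normSq lC := by
    rw [hnr1]
    field_simp
  have t2 : Complex.normSq μ ≤ nrm (B.mulVec p₂) / nrm p₂ := by
    rw [le_div_iff₀ hp2_pos, hnr2]
    have := mul_nonneg (Complex.normSq_nonneg ((μ - lC) * a)) (le_of_lt hy_pos)
    linarith
  have t3 : Complex.normSq μ ≤ nrm (B.mulVec p₃) / nrm p₃ := by
    rw [le_div_iff₀ hp3_pos, hnr3, Complex.normSq_conj]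
    have h1 := mul_nonneg (Complex.normSq_nonneg
      (b₁ * ((starRingEnd ℂ) μ - lC) - b₂ * ((μ - lC) * a))) (le_of_lt hy_pos)
    have h2 := mul_nonneg (Complex.normSq_nonneg (b₂ * ((starRingEnd ℂ) μ - μ)))
      (le_of_lt hp2_pos)
    linarith
  linarith [hmain, t1, t2, t3]


/-- Bauer–Fike style estimate against the all-ones matrix. -/
lemma bauer_fike (B : Matrix (Fin n) (Fin n) ℂ) (μ : ℂ) (x : Fin n → ℂ) (hx0 : x ≠ 0)
    (hx : B.mulVec x = μ • x) (hn : 0 < n) :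
    min (Complex.normSq μ) (Complex.normSq (μ - (n : ℂ)))
      ≤ ∑ k, ∑ j, Complex.normSq (B k j - 1) := by
  classical
  set E : Matrix (Fin n) (Fin n) ℂ := B - Matrix.of (fun _ _ => (1:ℂ)) with hEdef
  have hEentry : ∀ k j, E k j = B k j - 1 := by
    intro k j
    rw [hEdef]
    simp [Matrix.sub_apply]
  have hsum : (∑ k, ∑ j, Complex.normSq (E k j))
      = ∑ k, ∑ j, Complex.normSq (B k j - 1) := by
    refine Finset.sum_congr rfl fun k _ => Finset.sum_congr rfl fun j _ => ?_
    rw [hEentry]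
  set one : Fin n → ℂ := fun _ => 1 with honedef
  set σ : ℂ := ∑ j, x j with hσdef
  have hJx : (Matrix.of fun _ _ => (1:ℂ)).mulVec x = σ • one := by
    funext k
    simp only [Matrix.mulVec, dotProduct, Matrix.of_apply, one_mul,
      Pi.smul_apply, smul_eq_mul, honedef, mul_one, hσdef]
  have hEx : E.mulVec x = μ • x - σ • one := by
    rw [hEdef, sub_mulVec', hx, hJx]
  have hncast : ((n:ℂ)) ≠ 0 := by
    exact_mod_cast Nat.cast_ne_zero.2 hn.ne'
  set c : ℂ := σ / (n:ℂ) with hcdef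
  have hσc : σ = (n:ℂ) * c := by
    rw [hcdef]
    field_simp
  set v : Fin n → ℂ := x - c • one with hvdef
  have hone : nrm one = (n:ℝ) := by
    simp [nrm, honedef]
  have hinn_one_x : inn one x = σ := by
    simp [inn, honedef, hσdef]
  have hinn_one_one : inn one one = ((n:ℝ) : ℂ) := by
    rw [← hone, inn_self]
  have hov : inn one v = 0 := by
    rw [hvdef, inn_sub_right, inn_smul_right, hinn_one_one, hinn_one_x, hσc]
    push_cast
    ring
  have hvo : inn v (c • one) = 0 := by
    rw [inn_smul_right, inn_conj_symm, hov, map_zero, mul_zero]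
  have hxv : x = v + c • one := by rw [hvdef]; abel
  have hEx2 : E.mulVec x = μ • v + ((μ - (n:ℂ)) * c) • one := by
    rw [hEx, hσc]
    conv_lhs => rw [hxv]
    funext k
    simp only [Pi.add_apply, Pi.sub_apply, Pi.smul_apply, smul_eq_mul]
    ring
  have horth : inn (μ • v) (((μ - (n:ℂ)) * c) • one) = 0 := by
    rw [inn_smul_left, inn_smul_right, inn_conj_symm, hov, map_zero]
    ring
  have hnE : nrm (E.mulVec x)
      = Complex.normSq μ * nrm v
        + Complex.normSq (μ - (n:ℂ)) * (Complex.normSq c * (n:ℝ)) := by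
    rw [hEx2, nrm_add_of_inn_eq_zero horth, nrm_smul, nrm_smul, hone,
      Complex.normSq_mul]
    ring
  have hnx : nrm x = nrm v + Complex.normSq c * (n:ℝ) := by
    conv_lhs => rw [hxv]
    rw [nrm_add_of_inn_eq_zero hvo, nrm_smul, hone]
  have hup := nrm_mulVec_le E x
  set m : ℝ := min (Complex.normSq μ) (Complex.normSq (μ - (n:ℂ))) with hmdef
  have hlow : m * nrm x ≤ nrm (E.mulVec x) := by
    rw [hnE, hnx, mul_add]
    have q1 : m * nrm v ≤ Complex.normSq μ * nrm v :=
      mul_le_mul_of_nonneg_right (min_le_left _ _) (nrm_nonneg v)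
    have q2 : m * (Complex.normSq c * (n:ℝ))
        ≤ Complex.normSq (μ - (n:ℂ)) * (Complex.normSq c * (n:ℝ)) :=
      mul_le_mul_of_nonneg_right (min_le_right _ _)
        (mul_nonneg (Complex.normSq_nonneg c) (Nat.cast_nonneg n))
    linarith
  have hxpos : 0 < nrm x := nrm_pos_of_ne_zero hx0
  have := le_of_mul_le_mul_right (le_trans hlow hup) hxpos
  rw [← hsum]
  exact this

end

end ModulusBoundAux

open Matrix Polynomial

set_option maxHeartbeats 1600000 in
theorem modulus_bound (n : ℕ) (A : Matrix (Fin n) (Fin n) ℝ)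
    (hA : ∀ i j, 0 ≤ A i j ∧ A i j ≤ 1)
    (lmax : ℝ)
    (hl : ((lmax : ℂ)) ∈ ((A.map Complex.ofReal).charpoly).roots)
    (hlmax : ∀ z ∈ ((A.map Complex.ofReal).charpoly).roots, ‖z‖ ≤ lmax)
    (μ : ℂ) (hμ : μ ∈ ((A.map Complex.ofReal).charpoly).roots) (him : μ.im ≠ 0) :
    ‖μ‖ ^ 2 ≤ (n ^ 2 + n * lmax - 2 * lmax ^ 2) / 4 := by
  classical
  obtain ⟨x, hx0, hx⟩ := ModulusBoundAux.exists_eigenvector _ μ hμ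
  obtain ⟨y, hy0, hy⟩ := ModulusBoundAux.exists_eigenvector _ ((lmax : ℂ)) hl
  have hBreal : ∀ k j, (starRingEnd ℂ) ((A.map Complex.ofReal) k j)
      = (A.map Complex.ofReal) k j := by
    intro k j
    simp [Matrix.map_apply, Complex.conj_ofReal]
  have him1 : μ ≠ ((lmax : ℂ)) := by
    intro h
    apply him
    rw [h, Complex.ofReal_im]
  have him2 : (starRingEnd ℂ) μ ≠ μ := by
    intro h
    exact him (Complex.conj_eq_iff_im.1 h)
  have him3 : (starRingEnd ℂ) μ ≠ ((lmax : ℂ)) := by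
    intro h
    exact him1 (by rw [← Complex.conj_conj μ, h, Complex.conj_ofReal])
  have hSchur := ModulusBoundAux.schur_three _ hBreal ((lmax : ℂ)) μ x y hx0 hy0
    hx hy him1 him2 him3
  have hn : 0 < n := by
    have hne : x ≠ fun _ => 0 := by simpa [funext_iff] using hx0
    obtain ⟨j, -⟩ := Function.ne_iff.1 hx0
    exact j.pos
  have hBF := ModulusBoundAux.bauer_fike _ μ x hx0 hx hn
  set FF : ℝ := ∑ k, ∑ j, Complex.normSq ((A.map Complex.ofReal) k j) with hFFdef
  set FE : ℝ := ∑ k, ∑ j, Complex.normSq ((A.map Complex.ofReal) k j - 1) with hFEdef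
  have hFE0 : 0 ≤ FE := by
    rw [hFEdef]
    refine Finset.sum_nonneg fun k _ => Finset.sum_nonneg fun j _ => ?_
    exact Complex.normSq_nonneg _
  have hcap : FF + FE ≤ (n:ℝ)^2 := by
    have hpt : ∀ k j : Fin n, Complex.normSq ((A.map Complex.ofReal) k j)
        + Complex.normSq ((A.map Complex.ofReal) k j - 1) ≤ 1 := by
      intro k j
      have h1 := (hA k j).1
      have h2 := (hA k j).2
      have e1 : (A.map Complex.ofReal) k j = ((A k j : ℝ) : ℂ) := rfl
      rw [e1, show ((A k j : ℝ) : ℂ) - 1 = ((A k j - 1 : ℝ) : ℂ) by push_cast; ring,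
        Complex.normSq_ofReal, Complex.normSq_ofReal]
      nlinarith
    have hsum : (∑ k : Fin n, ∑ j : Fin n,
        (Complex.normSq ((A.map Complex.ofReal) k j)
          + Complex.normSq ((A.map Complex.ofReal) k j - 1)))
        ≤ ∑ _k : Fin n, ∑ _j : Fin n, (1:ℝ) :=
      Finset.sum_le_sum fun k _ => Finset.sum_le_sum fun j _ => hpt k j
    have hconst : (∑ _k : Fin n, ∑ _j : Fin n, (1:ℝ)) = (n:ℝ)^2 := by
      simp [Finset.sum_const, Finset.card_univ]
      ring
    have hsplit : (∑ k : Fin n, ∑ j : Fin n,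
        (Complex.normSq ((A.map Complex.ofReal) k j)
          + Complex.normSq ((A.map Complex.ofReal) k j - 1))) = FF + FE := by
      rw [hFFdef, hFEdef, ← Finset.sum_add_distrib]
      exact Finset.sum_congr rfl fun k _ => Finset.sum_add_distrib
    rw [← hconst, ← hsplit]
    exact hsum
  set r : ℝ := ‖μ‖ with hrdef
  have hr2 : Complex.normSq μ = r^2 := by rw [hrdef, Complex.sq_norm]
  have hl2 : Complex.normSq ((lmax : ℂ)) = lmax^2 := by
    rw [Complex.normSq_ofReal]
    ring
  have hrl : r ≤ lmax := hlmax μ hμ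
  have hr0 : 0 ≤ r := norm_nonneg μ
  have hl0 : 0 ≤ lmax := by
    have := hlmax _ hl
    rw [Complex.norm_real, Real.norm_eq_abs] at this
    linarith [abs_nonneg lmax]
  have hSchur' : lmax^2 + 2*r^2 ≤ FF := by
    rw [← hr2, ← hl2]
    linarith [hSchur]
  set d2 : ℝ := Complex.normSq (μ - (n:ℂ)) with hd2def
  have hBF' : min (r^2) d2 ≤ FE := by
    rw [← hr2]
    exact hBF
  have htri : (n:ℝ) - r ≤ ‖μ - (n:ℂ)‖ := by
    have h2 : ‖(n:ℂ)‖ ≤ ‖(n:ℂ) - μ‖ + ‖μ‖ := by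
      have := norm_add_le ((n:ℂ) - μ) μ
      simpa using this
    have h3 : ‖(n:ℂ) - μ‖ = ‖μ - (n:ℂ)‖ := by
      rw [show (n:ℂ) - μ = -(μ - (n:ℂ)) by ring, norm_neg]
    have habsn : ‖(n:ℂ)‖ = (n:ℝ) := Complex.norm_natCast n
    rw [h3, habsn] at h2
    linarith
  have hgoal : ‖μ‖ ^ 2 = r ^ 2 := by rw [hrdef]
  rw [hgoal, le_div_iff₀ (by norm_num : (0:ℝ) < 4)]
  have hle : lmax^2 ≤ (n:ℝ)^2 := by nlinarith [hSchur', hcap, hFE0, sq_nonneg r]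
  have hln : lmax ≤ (n:ℝ) := by nlinarith [hle, hl0, Nat.cast_nonneg (α := ℝ) n]
  have hrn : r ≤ (n:ℝ) := le_trans hrl hln
  have hd2' : ((n:ℝ) - r)^2 ≤ d2 := by
    rw [hd2def, ← Complex.sq_norm]
    exact pow_le_pow_left₀ (by linarith) htri 2
  -- now pure real arithmetic
  clear_value r d2 FF FE
  clear hBF hSchur hμ hl hlmax hx hy hBreal him1 him2 him3 hA him htri hgoal
    hr2 hl2 hd2def hrdef hx0 hy0
  set N : ℝ := (n:ℝ) with hNdef
  rcases le_total (r^2) d2 with hm | hm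
  · -- case (i)
    have h1 : r^2 ≤ FE := by
      rw [min_eq_left hm] at hBF'
      exact hBF'
    rcases le_total (2*lmax) N with hc | hc
    · have hp : (0:ℝ) ≤ (N - 2*lmax) * (N + 3*lmax) :=
        mul_nonneg (by linarith) (by linarith)
      have hrr : r^2 ≤ lmax^2 := by nlinarith [hrl, hr0]
      nlinarith [hp, hrr]
    · have hS : lmax^2 + 3*r^2 ≤ N^2 := by linarith [hSchur', h1, hcap]
      have hp : (0:ℝ) ≤ (N - lmax) * (2*lmax - N) :=
        mul_nonneg (by linarith) (by linarith)
      nlinarith [hS, hp]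
  · -- case (ii)
    have h1 : d2 ≤ FE := by
      rw [min_eq_right hm] at hBF'
      exact hBF'
    have hC : lmax^2 + 2*r^2 + (N - r)^2 ≤ N^2 := by
      linarith [hSchur', hcap, hd2', h1]
    have hC' : lmax^2 + 3*r^2 ≤ 2*N*r := by nlinarith [hC]
    have h2r : 2*r ≤ N := by nlinarith [hC', hrl, hr0]
    have q1 : (0:ℝ) ≤ N * (lmax - r) := by
      apply mul_nonneg (by rw [hNdef]; exact Nat.cast_nonneg n) (by linarith)
    have q2 : (0:ℝ) ≤ (N - r) * (N - 2*r) :=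
      mul_nonneg (by linarith) (by linarith)
    nlinarith [hC, q1, q2]
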